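/- Let G be a matrix Lie group, Θ : G → H a Lie group homomorphism with kernel N, Ψ : [0,T] → G a smooth curve, and s : H → G a smooth local section of Θ (i.e., Θ∘s = id). Define Q(t) = s(Θ(Ψ(t))) and a(t) = Q(t)⁻¹ Ψ(t). Then a(t) ∈ N for all t, and a satisfies the ODE ȧ = (Q⁻¹ A Q − Q⁻¹ Q̇) a where A(t) = Ψ̇(t)Ψ(t)⁻¹; moreover Q⁻¹AQ − Q⁻¹Q̇ lies in the Lie algebra of N. -/

import Mathlib

attribute [local instance] Matrix.normedAddCommGroup Matrix.normedSpace

namespace SectionDecompAux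

noncomputable def entryCLM (n : ℕ) (i j : Fin n) : Matrix (Fin n) (Fin n) ℝ →L[ℝ] ℝ :=
  (ContinuousLinearMap.proj (R := ℝ) (φ := fun _ : Fin n => ℝ) j).comp
    (ContinuousLinearMap.proj (R := ℝ) (φ := fun _ : Fin n => Fin n → ℝ) i)

theorem entryCLM_apply (n : ℕ) (i j : Fin n) (M : Matrix (Fin n) (Fin n) ℝ) :
    entryCLM n i j M = M i j := rfl

theorem diff_entry (n : ℕ) (i j : Fin n) :
    Differentiable ℝ (fun M : Matrix (Fin n) (Fin n) ℝ => M i j) :=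
  (entryCLM n i j).differentiable

theorem diff_det (n : ℕ) : Differentiable ℝ (Matrix.det : Matrix (Fin n) (Fin n) ℝ → ℝ) := by
  have h : (Matrix.det : Matrix (Fin n) (Fin n) ℝ → ℝ) =
      fun M => ∑ σ : Equiv.Perm (Fin n), ((Equiv.Perm.sign σ : ℤ) : ℝ) * ∏ i, M (σ i) i := by
    funext M
    rw [Matrix.det_apply]
    simp [Units.smul_def, zsmul_eq_mul]
  rw [h]
  apply Differentiable.fun_sum
  intro σ _
  apply Differentiable.const_mul
  intro M
  exact (HasFDerivAt.finset_prod (u := Finset.univ)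
    (g := fun (i : Fin n) (M : Matrix (Fin n) (Fin n) ℝ) => M (σ i) i)
    (g' := fun i => entryCLM n (σ i) i)
    (fun i _ => (entryCLM n (σ i) i).hasFDerivAt)).differentiableAt

theorem diff_updateRow (n : ℕ) (j : Fin n) (c : Fin n → ℝ) :
    Differentiable ℝ (fun M : Matrix (Fin n) (Fin n) ℝ => M.updateRow j c) := by
  refine differentiable_pi.2 ?_
  intro k
  rw [differentiable_pi]
  intro l
  by_cases hk : k = j
  · subst hk
    have : (fun M : Matrix (Fin n) (Fin n) ℝ => M.updateRow k c k l) = fun _ => c l := by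
      funext M; simp [Matrix.updateRow_apply]
    rw [this]; exact differentiable_const _
  · have : (fun M : Matrix (Fin n) (Fin n) ℝ => M.updateRow j c k l) = fun M => M k l := by
      funext M; simp [Matrix.updateRow_apply, hk]
    rw [this]; exact diff_entry n k l

theorem diff_adjugate (n : ℕ) :
    Differentiable ℝ (fun M : Matrix (Fin n) (Fin n) ℝ => M.adjugate) := by
  refine differentiable_pi.2 ?_
  intro i
  rw [differentiable_pi]
  intro j
  have : (fun M : Matrix (Fin n) (Fin n) ℝ => M.adjugate i j) =
      fun M => (M.updateRow j (Pi.single i 1)).det := by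
    funext M; rw [Matrix.adjugate_apply]
  rw [this]
  exact (diff_det n).comp (diff_updateRow n j (Pi.single i 1))

theorem diffAt_inv (n : ℕ) {M : Matrix (Fin n) (Fin n) ℝ} (h : IsUnit M) :
    DifferentiableAt ℝ (fun X : Matrix (Fin n) (Fin n) ℝ => X⁻¹) M := by
  have hd : IsUnit M.det := (Matrix.isUnit_iff_isUnit_det M).mp h
  have heq : (fun X : Matrix (Fin n) (Fin n) ℝ => X⁻¹) =
      fun X => Ring.inverse X.det • X.adjugate := funext fun X => X.inv_def
  rw [heq]
  exact ((differentiableAt_inverse (𝕜 := ℝ) hd).comp M ((diff_det n).differentiableAt)).smul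
    (diff_adjugate n).differentiableAt

theorem hasDerivAt_matmul {n : ℕ} {f g : ℝ → Matrix (Fin n) (Fin n) ℝ}
    {f' g' : Matrix (Fin n) (Fin n) ℝ} {t : ℝ}
    (hf : HasDerivAt f f' t) (hg : HasDerivAt g g' t) :
    HasDerivAt (fun u => f u * g u) (f' * g t + f t * g') t := by
  refine hasDerivAt_pi.2 ?_
  intro i
  rw [hasDerivAt_pi]
  intro j
  have heq : (fun u => (f u * g u) i j) = fun u => ∑ k, f u i k * g u k j := by
    funext u; rw [Matrix.mul_apply]
  rw [heq]
  have hval : (f' * g t + f t * g') i j =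
      ∑ k, (f' i k * g t k j + f t i k * g' k j) := by
    simp [Matrix.mul_apply, Matrix.add_apply, Finset.sum_add_distrib]
  rw [hval]
  apply HasDerivAt.fun_sum
  intro k _
  exact (hasDerivAt_pi.1 (hasDerivAt_pi.1 hf i) k).mul (hasDerivAt_pi.1 (hasDerivAt_pi.1 hg k) j)

end SectionDecompAux

open SectionDecompAux in
/-- Let `Θ` be a (matrix Lie group) homomorphism with kernel `N`, `Ψ` a smooth curve of
invertible matrices with logarithmic derivative `A(t) = Ψ̇ Ψ⁻¹`, and `s` a smooth local
section of `Θ`. Setting `Q(t) = s(Θ(Ψ(t)))` and `a(t) = Q(t)⁻¹ Ψ(t)`, the curve `a` stays in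
the kernel of `Θ`, satisfies the ODE `ȧ = (Q⁻¹AQ − Q⁻¹Q̇)a`, and the generator
`Q⁻¹AQ − Q⁻¹Q̇` lies in the Lie algebra of the kernel (it is killed by `dΘ` at the
identity). -/
theorem section_decomposition_kernel_ode
    (n m : ℕ)
    (Θ : Matrix (Fin n) (Fin n) ℝ → Matrix (Fin m) (Fin m) ℝ)
    (hΘdiff : Differentiable ℝ Θ)
    (hΘmul : ∀ X Y : Matrix (Fin n) (Fin n) ℝ, IsUnit X → IsUnit Y → Θ (X * Y) = Θ X * Θ Y)
    (hΘ1 : Θ 1 = 1)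
    (hΘunit : ∀ X : Matrix (Fin n) (Fin n) ℝ, IsUnit X → IsUnit (Θ X))
    (s : Matrix (Fin m) (Fin m) ℝ → Matrix (Fin n) (Fin n) ℝ)
    (hsdiff : Differentiable ℝ s)
    (hsec : ∀ h : Matrix (Fin m) (Fin m) ℝ, IsUnit h → Θ (s h) = h)
    (Ψ : ℝ → Matrix (Fin n) (Fin n) ℝ)
    (hΨunit : ∀ t, IsUnit (Ψ t))
    (A : ℝ → Matrix (Fin n) (Fin n) ℝ)
    (hΨ : ∀ t, HasDerivAt Ψ (A t * Ψ t) t)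
    (Q a : ℝ → Matrix (Fin n) (Fin n) ℝ)
    (hQ : ∀ t, Q t = s (Θ (Ψ t)))
    (hQunit : ∀ t, IsUnit (Q t))
    (ha : ∀ t, a t = (Q t)⁻¹ * Ψ t) :
    (∀ t, Θ (a t) = 1) ∧
    (∀ t, HasDerivAt a
      (((Q t)⁻¹ * A t * Q t - (Q t)⁻¹ * deriv Q t) * a t) t) ∧
    (∀ t, fderiv ℝ Θ 1 ((Q t)⁻¹ * A t * Q t - (Q t)⁻¹ * deriv Q t) = 0) := by
  -- basic unit facts
  have hQdet : ∀ t, IsUnit (Q t).det := fun t => (Matrix.isUnit_iff_isUnit_det _).mp (hQunit t)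
  have hQinv_unit : ∀ t, IsUnit ((Q t)⁻¹) := fun t =>
    (Matrix.isUnit_iff_isUnit_det _).mpr (Matrix.isUnit_nonsing_inv_det _ (hQdet t))
  have haunit : ∀ t, IsUnit (a t) := fun t => by
    rw [ha]; exact (hQinv_unit t).mul (hΨunit t)
  have hadet : ∀ t, IsUnit (a t).det := fun t => (Matrix.isUnit_iff_isUnit_det _).mp (haunit t)
  -- Θ of inverse
  have hΘinv : ∀ X : Matrix (Fin n) (Fin n) ℝ, IsUnit X → Θ X⁻¹ = (Θ X)⁻¹ := by
    intro X hX
    have hXd : IsUnit X.det := (Matrix.isUnit_iff_isUnit_det _).mp hX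
    have hXinv : IsUnit X⁻¹ :=
      (Matrix.isUnit_iff_isUnit_det _).mpr (Matrix.isUnit_nonsing_inv_det _ hXd)
    exact (Matrix.inv_eq_right_inv
      (by rw [← hΘmul X X⁻¹ hX hXinv, Matrix.mul_nonsing_inv _ hXd, hΘ1])).symm
  -- Θ Q = Θ Ψ
  have hΘQ : ∀ t, Θ (Q t) = Θ (Ψ t) := fun t => by
    rw [hQ]; exact hsec _ (hΘunit _ (hΨunit t))
  -- part 1
  have part1 : ∀ t, Θ (a t) = 1 := by
    intro t
    rw [ha, hΘmul _ _ (hQinv_unit t) (hΨunit t), hΘinv _ (hQunit t), hΘQ]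
    exact Matrix.nonsing_inv_mul _ ((Matrix.isUnit_iff_isUnit_det _).mp (hΘunit _ (hΨunit t)))
  -- differentiability of Q
  have hQfun : Q = fun u => s (Θ (Ψ u)) := funext hQ
  have hQdAt : ∀ t, DifferentiableAt ℝ Q t := by
    intro t
    rw [hQfun]
    exact ((hsdiff (Θ (Ψ t))).comp t ((hΘdiff (Ψ t)).comp t (hΨ t).differentiableAt))
  have hQd : ∀ t, HasDerivAt Q (deriv Q t) t := fun t => (hQdAt t).hasDerivAt
  -- derivative of Q⁻¹
  have hinv : ∀ t, HasDerivAt (fun u => (Q u)⁻¹)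
      (-((Q t)⁻¹ * deriv Q t * (Q t)⁻¹)) t := by
    intro t
    have hIdAt : DifferentiableAt ℝ (fun u => (Q u)⁻¹) t :=
      (diffAt_inv n (hQunit t)).comp t (hQdAt t)
    set D := deriv (fun u => (Q u)⁻¹) t with hDdef
    have hD : HasDerivAt (fun u => (Q u)⁻¹) D t := hIdAt.hasDerivAt
    have h1 : HasDerivAt (fun u => (Q u)⁻¹ * Q u) (D * Q t + (Q t)⁻¹ * deriv Q t) t :=
      hasDerivAt_matmul hD (hQd t)
    have h2 : (fun u => (Q u)⁻¹ * Q u) = fun _ => (1 : Matrix (Fin n) (Fin n) ℝ) :=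
      funext fun u => Matrix.nonsing_inv_mul _ (hQdet u)
    rw [h2] at h1
    have h3 : D * Q t + (Q t)⁻¹ * deriv Q t = 0 := h1.unique (hasDerivAt_const t 1)
    have hq : Q t * (Q t)⁻¹ = 1 := Matrix.mul_nonsing_inv _ (hQdet t)
    have hDval : D = -((Q t)⁻¹ * deriv Q t * (Q t)⁻¹) := by
      have h4 : D * Q t = -((Q t)⁻¹ * deriv Q t) := eq_neg_of_add_eq_zero_left h3
      calc D = D * (Q t * (Q t)⁻¹) := by rw [hq, mul_one]
        _ = D * Q t * (Q t)⁻¹ := by rw [mul_assoc]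
        _ = -((Q t)⁻¹ * deriv Q t) * (Q t)⁻¹ := by rw [h4]
        _ = -((Q t)⁻¹ * deriv Q t * (Q t)⁻¹) := by rw [neg_mul]
    rw [← hDval]
    exact hD
  -- part 2
  have part2 : ∀ t, HasDerivAt a
      (((Q t)⁻¹ * A t * Q t - (Q t)⁻¹ * deriv Q t) * a t) t := by
    intro t
    have hafun : a = fun u => (Q u)⁻¹ * Ψ u := funext ha
    have h1 : HasDerivAt (fun u => (Q u)⁻¹ * Ψ u)
        (-((Q t)⁻¹ * deriv Q t * (Q t)⁻¹) * Ψ t + (Q t)⁻¹ * (A t * Ψ t)) t :=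
      hasDerivAt_matmul (hinv t) (hΨ t)
    have heq : (((Q t)⁻¹ * A t * Q t - (Q t)⁻¹ * deriv Q t) * a t) =
        -((Q t)⁻¹ * deriv Q t * (Q t)⁻¹) * Ψ t + (Q t)⁻¹ * (A t * Ψ t) := by
      have hq : Q t * (Q t)⁻¹ = 1 := Matrix.mul_nonsing_inv _ (hQdet t)
      have hqq : Q t * ((Q t)⁻¹ * Ψ t) = Ψ t := by rw [← mul_assoc, hq, one_mul]
      rw [ha, sub_mul, mul_assoc ((Q t)⁻¹ * A t) (Q t) _, hqq]
      simp only [neg_mul, mul_assoc]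
      abel
    rw [hafun, heq] at *
    exact h1
  refine ⟨part1, part2, ?_⟩
  -- part 3
  intro t
  set B := (Q t)⁻¹ * A t * Q t - (Q t)⁻¹ * deriv Q t with hBdef
  have hainv : a t * (a t)⁻¹ = 1 := Matrix.mul_nonsing_inv _ (hadet t)
  have hc : HasDerivAt (fun u => a u * (a t)⁻¹) (B * a t * (a t)⁻¹ + a t * 0) t :=
    hasDerivAt_matmul (part2 t) (hasDerivAt_const t ((a t)⁻¹))
  have hc' : HasDerivAt (fun u => a u * (a t)⁻¹) B t := by
    have : B * a t * (a t)⁻¹ + a t * 0 = B := by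
      rw [mul_zero, add_zero, mul_assoc, hainv, mul_one]
    rwa [this] at hc
  have hcomp : HasDerivAt (fun u => Θ (a u * (a t)⁻¹))
      ((fderiv ℝ Θ (a t * (a t)⁻¹)) B) t :=
    ((hΘdiff (a t * (a t)⁻¹)).hasFDerivAt).comp_hasDerivAt t hc'
  have hconst : (fun u => Θ (a u * (a t)⁻¹)) = fun _ => (1 : Matrix (Fin m) (Fin m) ℝ) := by
    funext u
    have hatinv_unit : IsUnit ((a t)⁻¹) :=
      (Matrix.isUnit_iff_isUnit_det _).mpr (Matrix.isUnit_nonsing_inv_det _ (hadet t))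
    rw [hΘmul _ _ (haunit u) hatinv_unit, part1 u, hΘinv _ (haunit t), part1 t, one_mul,
      Matrix.inv_eq_right_inv (mul_one 1)]
  rw [hconst] at hcomp
  have hzero : (fderiv ℝ Θ (a t * (a t)⁻¹)) B = 0 := hcomp.unique (hasDerivAt_const t 1)
  rwa [hainv] at hzero
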